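/- arXiv:1105.3250 — 2 statements merged into one kernel-verified Lean document; each statement's English description precedes it below -/
import Mathlib

section
/- Let 𝔏 be a λ-synchronizing, left-resolving, predecessor-separated λ-graph system presenting a subshift Λ. Then the sets S_{v_i^l}(Λ) of words launched by the vertices v_1^l, ..., v_{m(l)}^l of V_l form a partition of S_l(Λ), the set of l-synchronizing words of Λ. -/
open scoped Classical

/-- The language of a subshift over alphabet `A`: nonempty, factorial
(closed under subwords) and extendable on both sides. -/
structure ShiftLang (A : Type*) where
  L : Set (List A)
  nil_mem : [] ∈ L
  factor : ∀ u v w : List A, u ++ v ++ w ∈ L → v ∈ L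
  ext_left : ∀ w ∈ L, ∃ a : A, (a :: w) ∈ L
  ext_right : ∀ w ∈ L, ∃ a : A, (w ++ [a]) ∈ L

namespace ShiftLang

variable {A : Type*} (Λ : ShiftLang A)

/-- Admissible words of length `l`. -/
def B (l : ℕ) : Set (List A) := {w | w ∈ Λ.L ∧ w.length = l}

/-- `Γ_l^-(μ)`: admissible words `ν` of length `l` with `νμ` admissible. -/
def Γminus (l : ℕ) (μ : List A) : Set (List A) := {ν | ν ∈ Λ.B l ∧ ν ++ μ ∈ Λ.L}

/-- `Γ_*^+(μ)`: followers of `μ`. -/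
def Γplus (μ : List A) : Set (List A) := {ω | μ ++ ω ∈ Λ.L}

/-- `S_l(Λ)`: the set of `l`-synchronizing words. -/
def Sync (l : ℕ) : Set (List A) :=
  {μ | μ ∈ Λ.L ∧ ∀ ω ∈ Λ.Γplus μ, Λ.Γminus l μ = Λ.Γminus l (μ ++ ω)}

/-- Irreducibility of a subshift in terms of its language. -/
def Irreducible : Prop := ∀ μ ∈ Λ.L, ∀ ν ∈ Λ.L, ∃ η, μ ++ η ++ ν ∈ Λ.L

/-- `λ`-synchronization of a subshift. -/
def IsLambdaSync : Prop :=
  ∀ l : ℕ, ∀ η ∈ Λ.B l, ∀ k : ℕ, l ≤ k → ∃ ν ∈ Λ.Sync k, η ++ ν ∈ Λ.Sync (k - l)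

/-- `μ ≻ ν` : there is `η` with `Γ_*^+(ν) = Γ_*^+(μην)`. -/
def Succ (μ ν : List A) : Prop := ∃ η, Λ.Γplus ν = Λ.Γplus (μ ++ η ++ ν)

/-- Synchronizing transitivity. -/
def SyncTransitive : Prop := ∀ μ ∈ Λ.L, ∀ ν ∈ Λ.L, Λ.Succ μ ν ∧ Λ.Succ ν μ

/-- The right one-sided shift space `X_Λ`. -/
def X : Set (ℕ → A) := {x | ∀ n : ℕ, (List.ofFn fun i : Fin n => x i) ∈ Λ.L}

end ShiftLang

/-- A (left-resolving–free) `λ`-graph system: a labeled Bratteli diagram with `ι`-maps. -/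
structure LGS (A : Type*) where
  V : ℕ → Type
  edge : ∀ l : ℕ, V l → A → V (l + 1) → Prop
  ι : ∀ l : ℕ, V (l + 1) → V l
  ι_surj : ∀ l, Function.Surjective (ι l)
  exists_succ : ∀ l (v : V l), ∃ a u, edge l v a u
  exists_pred : ∀ l (u : V (l + 1)), ∃ a v, edge l v a u
  local_prop : ∀ l (u : V l) (v : V (l + 2)) (a : A),
    (∃ w, edge (l + 1) w a v ∧ ι l w = u) ↔ edge l u a (ι (l + 1) v)

namespace LGS

variable {A : Type*} (G : LGS A)

/-- Labeled paths in a `λ`-graph system. -/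
inductive Path : ∀ {l m : ℕ}, G.V l → List A → G.V m → Prop
  | nil {l : ℕ} (v : G.V l) : Path v [] v
  | cons {l m : ℕ} {v : G.V l} {a : A} {u : G.V (l + 1)} {w : List A} {x : G.V m} :
      G.edge l v a u → Path u w x → Path v (a :: w) x

/-- The word `w` leaves the vertex `v`. -/
def Leaves {l : ℕ} (v : G.V l) (w : List A) : Prop := ∃ m, ∃ u : G.V m, G.Path v w u

/-- The vertex `v` launches the word `w`: `w` leaves `v` and no other vertex of `V_l`. -/
def Launches {l : ℕ} (v : G.V l) (w : List A) : Prop :=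
  G.Leaves v w ∧ ∀ v' : G.V l, G.Leaves v' w → v' = v

/-- Left-resolving: edges with the same label have distinct terminal vertices. -/
def LeftResolving : Prop :=
  ∀ (l : ℕ) (v v' : G.V l) (a : A) (u : G.V (l + 1)), G.edge l v a u → G.edge l v' a u → v = v'

/-- The predecessor set `Γ_l^-(v)` of a vertex: words of length `l` labeling paths from `V_0` to `v`. -/
def ΓminusV {l : ℕ} (v : G.V l) : Set (List A) :=
  {w | w.length = l ∧ ∃ v0 : G.V 0, G.Path v0 w v}

/-- Predecessor-separated: distinct vertices of `V_l` have distinct predecessor sets. -/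
def PredecessorSeparated : Prop := ∀ (l : ℕ) (u v : G.V l), G.ΓminusV u = G.ΓminusV v → u = v

/-- A `λ`-synchronizing `λ`-graph system: every vertex launches some word. -/
def LambdaSynchronizing : Prop := ∀ (l : ℕ) (v : G.V l), ∃ w : List A, G.Launches v w

/-- `G` presents the subshift `Λ`: the language of `Λ` is the set of words labeling paths of `G`. -/
def Presents (Λ : ShiftLang A) : Prop :=
  ∀ w : List A, w ∈ Λ.L ↔ ∃ (l : ℕ) (v : G.V l), G.Leaves v w

/-- Iterated `ι`-map `ι^n : V_{l+n} → V_l`. -/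
def iotaPow : ∀ (n : ℕ) {l : ℕ}, G.V (l + n) → G.V l
  | 0, _, v => v
  | n + 1, l, v => iotaPow n (G.ι (l + n) v)

/-- `ι`-irreducibility of a `λ`-graph system. -/
def IotaIrreducible : Prop :=
  ∀ (l : ℕ) (v u : G.V l) (γ : List A) (t : G.V (l + γ.length)), G.Path u γ t →
    ∃ (n : ℕ) (u' : G.V (l + n)) (w : List A) (t' : G.V (l + n + γ.length)),
      G.iotaPow n u' = u ∧ G.Path v w u' ∧ G.Path u' γ t' ∧
      G.iotaPow n (cast (congrArg G.V (Nat.add_right_comm l n γ.length)) t') = t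

/-- `λ`-irreducibility of a `λ`-graph system. -/
def LambdaIrreducible : Prop :=
  ∀ (l : ℕ) (u v : G.V l), ∃ L : ℕ, ∀ w : G.V (l + L),
    G.iotaPow L w = u → ∃ γ : List A, G.Path v γ w

/-- `Γ_∞^+(v)`: infinite label sequences of infinite paths starting at `v`. -/
def GammaInf {l : ℕ} (v : G.V l) : Set (ℕ → A) :=
  {x | ∃ vs : ∀ n : ℕ, G.V (l + n), vs 0 = v ∧ ∀ n, G.edge (l + n) (vs n) (x n) (vs (n + 1))}

/-- Condition (I): every vertex has at least two distinct infinite follower label sequences. -/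
def ConditionI : Prop := ∀ (l : ℕ) (v : G.V l), ∃ x ∈ G.GammaInf v, ∃ y ∈ G.GammaInf v, x ≠ y

/-- `G` is (isomorphic to) the `λ`-synchronizing `λ`-graph system `𝔏^{λ(Λ)}` of `Λ`:
vertices of `V_l` correspond to `l`-past equivalence classes of `l`-synchronizing words
(identified via their predecessor sets), and edges are as in the canonical construction. -/
def IsLambdaSyncSystem (Λ : ShiftLang A) : Prop :=
  (∀ (l : ℕ) (v : G.V l), ∃ μ ∈ Λ.Sync l, G.ΓminusV v = Λ.Γminus l μ) ∧
  (∀ l : ℕ, ∀ μ ∈ Λ.Sync l, ∃ v : G.V l, G.ΓminusV v = Λ.Γminus l μ) ∧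
  (∀ (l : ℕ) (v : G.V l) (a : A) (u : G.V (l + 1)),
    G.edge l v a u ↔ ∃ ν ∈ Λ.Sync (l + 1), (a :: ν) ∈ Λ.L ∧
      G.ΓminusV u = Λ.Γminus (l + 1) ν ∧ G.ΓminusV v = Λ.Γminus l (a :: ν))

end LGS

/-- The partial isometry `S_w = S_{w_1} ⋯ S_{w_k}` associated with a word. -/
def sword {A R : Type*} [Monoid R] (S : A → R) (w : List A) : R := (w.map S).prod


namespace LGS

variable {A : Type*} (G : LGS A)

lemma path_length {l m : ℕ} {v : G.V l} {w : List A} {x : G.V m}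
    (h : G.Path v w x) : m = l + w.length := by
  induction h with
  | nil => simp
  | cons e p ih => rw [ih]; simp [List.length_cons]; omega

lemma path_inv_cons {l m : ℕ} {v : G.V l} {a : A} {w : List A} {x : G.V m}
    (h : G.Path v (a :: w) x) : ∃ u : G.V (l + 1), G.edge l v a u ∧ G.Path u w x := by
  cases h with
  | cons e p => exact ⟨_, e, p⟩

lemma path_append {l m : ℕ} {v : G.V l} {x : G.V m} {w1 w2 : List A}
    (h : G.Path v (w1 ++ w2) x) :
    ∃ (k : ℕ) (y : G.V k), G.Path v w1 y ∧ G.Path y w2 x := by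
  induction w1 generalizing l v with
  | nil => exact ⟨l, v, Path.nil v, h⟩
  | cons a w1 ih =>
    obtain ⟨u, e, p⟩ := G.path_inv_cons h
    obtain ⟨k, y, p1, p2⟩ := ih p
    exact ⟨k, y, Path.cons e p1, p2⟩

lemma path_comp {l m k : ℕ} {v : G.V l} {y : G.V m} {x : G.V k} {w1 w2 : List A}
    (h1 : G.Path v w1 y) (h2 : G.Path y w2 x) : G.Path v (w1 ++ w2) x := by
  induction h1 with
  | nil => exact h2
  | cons e p ih => exact Path.cons e (ih h2)

lemma path_lr (hlr : G.LeftResolving) :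
    ∀ {w : List A} {l m : ℕ} {u u' : G.V l} {t : G.V m},
      G.Path u w t → G.Path u' w t → u = u' := by
  intro w
  induction w with
  | nil =>
    intro l m u u' t h h'
    cases h; cases h'; rfl
  | cons a w ih =>
    intro l m u u' t h h'
    obtain ⟨s, e, p⟩ := G.path_inv_cons h
    obtain ⟨s', e', p'⟩ := G.path_inv_cons h'
    have hs : s = s' := ih p p'
    exact hlr l u u' a s e (hs.symm ▸ e')

lemma path_proj :
    ∀ {w : List A} {l m : ℕ} {v : G.V (l + 1)} {x : G.V (m + 1)},
      G.Path v w x → G.Path (G.ι l v) w (G.ι m x) := by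
  intro w
  induction w with
  | nil =>
    intro l m v x h
    cases h
    exact Path.nil _
  | cons a w ih =>
    intro l m v x h
    obtain ⟨u, e, p⟩ := G.path_inv_cons h
    have e' : G.edge l (G.ι l v) a (G.ι (l + 1) u) :=
      (G.local_prop l (G.ι l v) u a).mp ⟨v, e, rfl⟩
    exact Path.cons e' (ih p)

lemma path_lift :
    ∀ {w : List A} {l m : ℕ} {v : G.V l} {x : G.V m}, G.Path v w x →
      ∀ x' : G.V (m + 1), G.ι m x' = x →
      ∃ v' : G.V (l + 1), G.ι l v' = v ∧ G.Path v' w x' := by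
  intro w
  induction w with
  | nil =>
    intro l m v x h x' hx
    cases h
    exact ⟨x', hx, Path.nil _⟩
  | cons a w ih =>
    intro l m v x h x' hx
    obtain ⟨u, e, p⟩ := G.path_inv_cons h
    obtain ⟨u', hu', p'⟩ := ih p x' hx
    have e2 : G.edge l v a (G.ι (l + 1) u') := hu'.symm ▸ e
    obtain ⟨v', e3, hv'⟩ := (G.local_prop l v u' a).mpr e2
    exact ⟨v', hv', Path.cons e3 p'⟩

lemma leaves_down {l : ℕ} {v : G.V (l + 1)} {w : List A} (h : G.Leaves v w) :
    G.Leaves (G.ι l v) w := by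
  obtain ⟨m, x, p⟩ := h
  have hm : m = (l + w.length) + 1 := by have := G.path_length p; omega
  subst hm
  exact ⟨_, _, G.path_proj p⟩

lemma leaves_up {l : ℕ} {v : G.V l} {w : List A} (h : G.Leaves v w) :
    ∃ v' : G.V (l + 1), G.Leaves v' w := by
  obtain ⟨m, x, p⟩ := h
  obtain ⟨x', hx⟩ := G.ι_surj m x
  obtain ⟨v', _, p'⟩ := G.path_lift p x' hx
  exact ⟨v', _, _, p'⟩

lemma leaves_zero {w : List A} :
    (∃ (m : ℕ) (v : G.V m), G.Leaves v w) → ∃ v : G.V 0, G.Leaves v w := by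
  rintro ⟨m, v, h⟩
  induction m with
  | zero => exact ⟨v, h⟩
  | succ k ih => exact ih _ (G.leaves_down h)

lemma exists_leaves_at {Λ : ShiftLang A} (hpres : G.Presents Λ) {w : List A}
    (hw : w ∈ Λ.L) (l : ℕ) : ∃ v : G.V l, G.Leaves v w := by
  have h0 : ∃ v : G.V 0, G.Leaves v w := G.leaves_zero ((hpres w).mp hw)
  induction l with
  | zero => exact h0
  | succ k ih =>
    obtain ⟨v, hv⟩ := ih
    exact G.leaves_up hv

end LGS

/-- for a `λ`-synchronizing, left-resolving, predecessor-separated `λ`-graph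
system `G` presenting `Λ`, the sets `S_{v}(Λ)` of words launched by the vertices `v ∈ V_l`
partition `S_l(Λ)`: every `l`-synchronizing word is launched by some vertex, and no word is
launched by two distinct vertices. -/
theorem launch_sets_partition {A : Type*} (G : LGS A) (Λ : ShiftLang A)
    (hpres : G.Presents Λ) (hlr : G.LeftResolving) (hps : G.PredecessorSeparated)
    (hls : G.LambdaSynchronizing) (l : ℕ) :
    (∀ ν : List A, ν ∈ Λ.Sync l ↔ ∃ v : G.V l, G.Launches v ν) ∧
    (∀ (u v : G.V l) (ν : List A), G.Launches u ν → G.Launches v ν → u = v) := by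
  constructor
  · intro ν
    constructor
    · rintro ⟨hνL, hsync⟩
      obtain ⟨v, hv⟩ := G.exists_leaves_at hpres hνL l
      have key : ∀ u : G.V l, G.Leaves u ν → G.ΓminusV u = Λ.Γminus l ν := by
        intro u hu
        obtain ⟨m, t, pt⟩ := hu
        ext μ
        constructor
        · rintro ⟨hlen, v0, p0⟩
          exact ⟨⟨(hpres μ).mpr ⟨0, v0, l, u, p0⟩, hlen⟩,
            (hpres _).mpr ⟨0, v0, m, t, G.path_comp p0 pt⟩⟩
        · rintro ⟨⟨hμL, hlen⟩, hμν⟩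
          have hm : m = l + ν.length := G.path_length pt
          obtain ⟨η, hηt⟩ := hls m t
          have hνη : ν ++ η ∈ Λ.L := by
            obtain ⟨m2, s, ps⟩ := hηt.1
            exact (hpres _).mpr ⟨l, u, m2, s, G.path_comp pt ps⟩
          have hη : η ∈ Λ.Γplus ν := hνη
          have hμsync : μ ∈ Λ.Γminus l (ν ++ η) := by
            rw [← hsync η hη]; exact ⟨⟨hμL, hlen⟩, hμν⟩
          obtain ⟨w0, m3, x3, p3⟩ := G.exists_leaves_at hpres hμsync.2 0
          obtain ⟨k1, y, pμ, prest⟩ := G.path_append p3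
          have hk1 : k1 = l := by have := G.path_length pμ; omega
          subst hk1
          obtain ⟨k2, s, pν, pη⟩ := G.path_append prest
          have hk2 : k2 = m := by have := G.path_length pν; omega
          subst hk2
          have hst : s = t := hηt.2 s ⟨_, _, pη⟩
          subst hst
          have hyu : y = u := G.path_lr hlr pν pt
          subst hyu
          exact ⟨hlen, w0, pμ⟩
      refine ⟨v, hv, fun v' hv' => hps l v' v ?_⟩
      rw [key v' hv', key v hv]
    · rintro ⟨v, hleav, huniq⟩
      refine ⟨(hpres ν).mpr ⟨l, v, hleav⟩, ?_⟩
      intro ω hω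
      have hνω : ν ++ ω ∈ Λ.L := hω
      ext μ
      constructor
      · rintro ⟨hB, hμν⟩
        refine ⟨hB, ?_⟩
        obtain ⟨u, m, x, pνω⟩ := G.exists_leaves_at hpres hνω l
        obtain ⟨k, s, pν, pω⟩ := G.path_append pνω
        have hsu : u = v := huniq u ⟨k, s, pν⟩
        subst hsu
        obtain ⟨w0, m2, x2, p2⟩ := G.exists_leaves_at hpres hμν 0
        obtain ⟨k1, y, pμ, pν2⟩ := G.path_append p2
        have hk1 : k1 = l := by have := G.path_length pμ; have := hB.2; omega
        subst hk1
        have hyv : y = u := huniq y ⟨m2, x2, pν2⟩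
        subst hyv
        exact (hpres _).mpr ⟨0, w0, m, x, G.path_comp pμ pνω⟩
      · rintro ⟨hB, hμνω⟩
        exact ⟨hB, Λ.factor [] (μ ++ ν) ω (by simpa [List.append_assoc] using hμνω)⟩
  · intro u v ν hu hv
    exact (hu.2 v hv.1).symm
end

section
/- Let Λ be a λ-synchronizing subshift. The right one-sided shift space X_Λ is perfect (has no isolated points) if and only if the λ-synchronizing λ-graph system 𝔏^{λ(Λ)} satisfies condition (I), i.e. for every vertex v the set Γ_∞^+(v) of infinite label sequences starting at v contains at least two distinct sequences. -/
open scoped Classical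

namespace ShiftLang

variable {A : Type*} {Λ : ShiftLang A}

lemma factor_left {u v : List A} (h : u ++ v ∈ Λ.L) : u ∈ Λ.L :=
  Λ.factor [] u v (by simpa using h)

lemma factor_right {u v : List A} (h : u ++ v ∈ Λ.L) : v ∈ Λ.L :=
  Λ.factor u v [] (by simpa using h)

lemma sync_mem_L {l : ℕ} {μ : List A} (h : μ ∈ Λ.Sync l) : μ ∈ Λ.L := h.1

lemma ext_left_iter {w : List A} (hw : w ∈ Λ.L) : ∀ j : ℕ, ∃ ξ : List A,
    ξ.length = j ∧ ξ ++ w ∈ Λ.L := by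
  intro j
  induction j with
  | zero => exact ⟨[], rfl, by simpa⟩
  | succ j ih =>
    obtain ⟨ξ, hlen, hmem⟩ := ih
    obtain ⟨a, ha⟩ := Λ.ext_left _ hmem
    exact ⟨a :: ξ, by simp [hlen], by simpa using ha⟩

/-- Γ_l(μ ++ ρ) = Γ_l μ for `μ` l-synchronizing and `μ ++ ρ` admissible. -/
lemma gamma_append_sync {l : ℕ} {μ ρ : List A} (hμ : μ ∈ Λ.Sync l)
    (h : μ ++ ρ ∈ Λ.L) : Λ.Γminus l (μ ++ ρ) = Λ.Γminus l μ :=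
  (hμ.2 ρ h).symm

/-- l-synchronizing words are closed under admissible right extension. -/
lemma sync_append {l : ℕ} {μ ρ : List A} (hμ : μ ∈ Λ.Sync l)
    (h : μ ++ ρ ∈ Λ.L) : μ ++ ρ ∈ Λ.Sync l := by
  refine ⟨h, fun ω hω => ?_⟩
  have hω' : (μ ++ ρ) ++ ω ∈ Λ.L := hω
  have h1 : Λ.Γminus l (μ ++ (ρ ++ ω)) = Λ.Γminus l μ :=
    gamma_append_sync hμ (by rwa [← List.append_assoc])
  rw [gamma_append_sync hμ h, List.append_assoc, h1]

/-- Sync is antitone in the level. -/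
lemma sync_anti {k j : ℕ} {μ : List A} (h : μ ∈ Λ.Sync k) (hjk : j ≤ k) :
    μ ∈ Λ.Sync j := by
  refine ⟨h.1, fun ω hω => ?_⟩
  ext ξ
  constructor
  · rintro ⟨⟨hξL, hξlen⟩, hξμ⟩
    obtain ⟨ξ', hlen', hmem'⟩ := ext_left_iter hξμ (k - j)
    have hbig : (ξ' ++ ξ) ++ μ ∈ Λ.L := by rwa [List.append_assoc]
    have hΓk : ξ' ++ ξ ∈ Λ.Γminus k μ :=
      ⟨⟨factor_left hbig, by simp [hlen', hξlen]; omega⟩, hbig⟩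
    rw [h.2 ω hω] at hΓk
    have : ξ' ++ (ξ ++ (μ ++ ω)) ∈ Λ.L := by
      have := hΓk.2; rwa [List.append_assoc] at this
    exact ⟨⟨hξL, hξlen⟩, factor_right this⟩
  · rintro ⟨⟨hξL, hξlen⟩, hξμω⟩
    obtain ⟨ξ', hlen', hmem'⟩ := ext_left_iter hξμω (k - j)
    have hbig : (ξ' ++ ξ) ++ (μ ++ ω) ∈ Λ.L := by rwa [List.append_assoc]
    have hΓk : ξ' ++ ξ ∈ Λ.Γminus k (μ ++ ω) :=
      ⟨⟨factor_left hbig, by simp [hlen', hξlen]; omega⟩, hbig⟩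
    rw [← h.2 ω hω] at hΓk
    have : ξ' ++ (ξ ++ μ) ∈ Λ.L := by
      have := hΓk.2; rwa [List.append_assoc] at this
    exact ⟨⟨hξL, hξlen⟩, factor_right this⟩

/-- Prepending a letter to a (j+1)-sync word gives a j-sync word. -/
lemma sync_prepend {j : ℕ} {a : A} {ρ : List A} (hρ : ρ ∈ Λ.Sync (j + 1))
    (h : (a :: ρ) ∈ Λ.L) : (a :: ρ) ∈ Λ.Sync j := by
  refine ⟨h, fun ω hω => ?_⟩
  have hρω : ρ ++ ω ∈ Λ.L := by
    have : [a] ++ (ρ ++ ω) ∈ Λ.L := by have h' : (a :: ρ) ++ ω ∈ Λ.L := hω; simpa using h'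
    exact factor_right this
  ext ξ
  have key : ∀ σ : List A, ξ ++ (a :: σ) = (ξ ++ [a]) ++ σ := by
    intro σ; simp
  constructor
  · rintro ⟨⟨hξL, hξlen⟩, hmem⟩
    rw [key] at hmem
    have hξa : ξ ++ [a] ∈ Λ.Γminus (j+1) ρ :=
      ⟨⟨factor_left hmem, by simp [hξlen]⟩, hmem⟩
    rw [hρ.2 ω hρω] at hξa
    exact ⟨⟨hξL, hξlen⟩, by simpa using hξa.2⟩
  · rintro ⟨⟨hξL, hξlen⟩, hmem⟩
    have hmem' : (ξ ++ [a]) ++ (ρ ++ ω) ∈ Λ.L := by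
      rw [← key]; simpa only [List.cons_append] using hmem
    have hξa : ξ ++ [a] ∈ Λ.Γminus (j+1) (ρ ++ ω) :=
      ⟨⟨factor_left hmem', by simp [hξlen]⟩, hmem'⟩
    rw [← hρ.2 ω hρω] at hξa
    exact ⟨⟨hξL, hξlen⟩, by rw [key]; exact hξa.2⟩

lemma sync_prepend_many {τ : List A} : ∀ (p : List A) {j : ℕ},
    τ ∈ Λ.Sync (j + p.length) → (p ++ τ) ∈ Λ.L → (p ++ τ) ∈ Λ.Sync j := by
  intro p
  induction p with
  | nil => intro j hτ hL; simpa using (by simpa using hτ : τ ∈ Λ.Sync j)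
  | cons a p' ih =>
    intro j hτ hL
    have e : j + (a :: p').length = (j + 1) + p'.length := by simp; omega
    rw [e] at hτ
    have hL' : p' ++ τ ∈ Λ.L := factor_right (u := [a]) (by simpa using hL)
    have hsync' : p' ++ τ ∈ Λ.Sync (j + 1) := ih hτ hL'
    have := sync_prepend (a := a) hsync' (by simpa using hL)
    simpa using this

end ShiftLang



namespace LGS

variable {A : Type*} {G : LGS A} {Λ : ShiftLang A}

lemma path_level : ∀ {l m : ℕ} {v : G.V l} {w : List A} {u : G.V m},
    G.Path v w u → m = l + w.length := by
  intro l m v w u h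
  induction h with
  | nil => simp
  | cons e p ih => simp [ih]; omega

lemma path_append_s11 : ∀ {l m k : ℕ} {v : G.V l} {p : List A} {u : G.V m}
    {q : List A} {t : G.V k}, G.Path v p u → G.Path u q t → G.Path v (p ++ q) t := by
  intro l m k v p u q t h1 h2
  induction h1 with
  | nil => simpa using h2
  | cons e p' ih => exact Path.cons e (ih h2)

lemma path_ofFn_chain {l : ℕ} (vs : ∀ n : ℕ, G.V (l + n)) (x : ℕ → A)
    (hE : ∀ n, G.edge (l + n) (vs n) (x n) (vs (n + 1))) :
    ∀ n : ℕ, G.Path (vs 0) (List.ofFn fun i : Fin n => x i) (vs n) := by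
  intro n
  induction n with
  | zero => simpa using Path.nil (vs 0)
  | succ n ih =>
    have h1 : G.Path (vs n) [x n] (vs (n + 1)) := Path.cons (hE n) (Path.nil _)
    have := path_append_s11 ih h1
    rw [List.ofFn_succ']
    simpa [List.concat_eq_append] using this

/-- If `ξ` labels a path from `V_0` into `v`, any word leaving `v` extends `ξ` admissibly. -/
lemma leaves_mem_L (hsys : G.IsLambdaSyncSystem Λ) {J m : ℕ} {v : G.V J} {u : G.V m}
    {ξ p : List A} (hξ : ξ ∈ G.ΓminusV v) (hp : G.Path v p u) : ξ ++ p ∈ Λ.L := by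
  obtain ⟨hlen, v0, h0⟩ := hξ
  have h01 : G.Path v0 (ξ ++ p) u := path_append_s11 h0 hp
  obtain ⟨ρ, hρ, hΓ⟩ := hsys.1 m u
  have hmem : ξ ++ p ∈ G.ΓminusV u := by
    refine ⟨?_, v0, h01⟩
    have := path_level h01
    simpa using this.symm
  rw [hΓ] at hmem
  exact hmem.1.1

end LGS

section Machine

open LGS

variable {A : Type*} (G : LGS A) (Λ : ShiftLang A)

/-- State of the path-generating machine. -/
structure MState (J : ℕ) where
  u : G.V J
  P : List A
  τ : List A
  hτ : τ ∈ Λ.Sync (J + P.length)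
  hL : (P ++ τ) ∈ Λ.L
  hΓ : G.ΓminusV u = Λ.Γminus J (P ++ τ)

variable {G Λ}

lemma step_cons (hsys : G.IsLambdaSyncSystem Λ) {J : ℕ} (u : G.V J) (c : A) (P₂ τ : List A)
    (hτ : τ ∈ Λ.Sync (J + (c :: P₂).length)) (hL : (c :: P₂) ++ τ ∈ Λ.L)
    (hΓ : G.ΓminusV u = Λ.Γminus J ((c :: P₂) ++ τ)) :
    ∃ S' : MState G Λ (J + 1), G.edge J u c S'.u ∧ S'.P = P₂ ∧ S'.τ = τ := by
  have hτ' : τ ∈ Λ.Sync ((J + 1) + P₂.length) := by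
    have e : J + (c :: P₂).length = (J + 1) + P₂.length := by simp; omega
    rwa [e] at hτ
  have hL' : P₂ ++ τ ∈ Λ.L := ShiftLang.factor_right (u := [c]) (by simpa using hL)
  have hν : P₂ ++ τ ∈ Λ.Sync (J + 1) := ShiftLang.sync_prepend_many P₂ hτ' hL'
  obtain ⟨u', hu'⟩ := hsys.2.1 (J + 1) (P₂ ++ τ) hν
  have hedge : G.edge J u c u' := by
    rw [hsys.2.2]
    exact ⟨P₂ ++ τ, hν, by simpa using hL, hu', by simpa using hΓ⟩
  exact ⟨⟨u', P₂, τ, hτ', hL', hu'⟩, hedge, rfl, rfl⟩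

lemma step_exists (hsys : G.IsLambdaSyncSystem Λ) (hls : Λ.IsLambdaSync)
    {J : ℕ} (S : MState G Λ J) :
    ∃ (a : A) (S' : MState G Λ (J + 1)), G.edge J S.u a S'.u ∧
      (S.P ≠ [] → S.P = a :: S'.P) := by
  obtain ⟨u, P, τ, hτ, hL, hΓ⟩ := S
  cases P with
  | cons c P₂ =>
    obtain ⟨S', he, hP, -⟩ := step_cons hsys u c P₂ τ hτ hL hΓ
    exact ⟨c, S', he, fun _ => by rw [hP]⟩
  | nil =>
    have hτJ : τ ∈ Λ.Sync J := by simpa using hτ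
    have hτL : τ ∈ Λ.L := hτJ.1
    obtain ⟨b, hb⟩ := Λ.ext_right τ hτL
    obtain ⟨τ', hτ', hsync⟩ := hls (τ ++ [b]).length (τ ++ [b]) ⟨hb, rfl⟩
      (J + (τ ++ [b]).length) (Nat.le_add_left _ _)
    have esub : J + (τ ++ [b]).length - (τ ++ [b]).length = J := by omega
    rw [esub] at hsync
    obtain ⟨c, P₂, hcons⟩ := List.exists_cons_of_ne_nil
      (show τ ++ [b] ≠ [] by simp)
    have hτ'' : τ' ∈ Λ.Sync (J + (c :: P₂).length) := by
      rw [← hcons]; exact hτ'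
    have hL'' : (c :: P₂) ++ τ' ∈ Λ.L := by
      rw [← hcons]; exact hsync.1
    have hΓ'' : G.ΓminusV u = Λ.Γminus J ((c :: P₂) ++ τ') := by
      rw [← hcons]
      have h1 : Λ.Γminus J (τ ++ ([b] ++ τ')) = Λ.Γminus J τ :=
        ShiftLang.gamma_append_sync hτJ (by rw [← List.append_assoc]; exact hsync.1)
      rw [List.append_assoc]
      rw [h1]
      simpa using hΓ
    obtain ⟨S', he, hP, -⟩ := step_cons hsys u c P₂ τ' hτ'' hL'' hΓ''
    exact ⟨c, S', he, fun hne => absurd rfl hne⟩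

/-- The infinite run of the machine. -/
noncomputable def mchain (hsys : G.IsLambdaSyncSystem Λ) (hls : Λ.IsLambdaSync)
    {J₀ : ℕ} (S₀ : MState G Λ J₀) : ∀ n : ℕ, MState G Λ (J₀ + n) := fun n =>
  Nat.rec S₀ (fun _ S => (step_exists hsys hls S).choose_spec.choose) n

noncomputable def mlabel (hsys : G.IsLambdaSyncSystem Λ) (hls : Λ.IsLambdaSync)
    {J₀ : ℕ} (S₀ : MState G Λ J₀) (n : ℕ) : A :=
  (step_exists hsys hls (mchain hsys hls S₀ n)).choose

lemma mchain_spec (hsys : G.IsLambdaSyncSystem Λ) (hls : Λ.IsLambdaSync)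
    {J₀ : ℕ} (S₀ : MState G Λ J₀) (n : ℕ) :
    G.edge (J₀ + n) (mchain hsys hls S₀ n).u (mlabel hsys hls S₀ n)
        (mchain hsys hls S₀ (n + 1)).u ∧
      ((mchain hsys hls S₀ n).P ≠ [] →
        (mchain hsys hls S₀ n).P = mlabel hsys hls S₀ n :: (mchain hsys hls S₀ (n + 1)).P) :=
  (step_exists hsys hls (mchain hsys hls S₀ n)).choose_spec.choose_spec

lemma mchain_pending (hsys : G.IsLambdaSyncSystem Λ) (hls : Λ.IsLambdaSync)
    {J₀ : ℕ} (S₀ : MState G Λ J₀) :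
    ∀ n : ℕ, n ≤ S₀.P.length → (mchain hsys hls S₀ n).P = S₀.P.drop n := by
  intro n
  induction n with
  | zero => intro _; rfl
  | succ n ih =>
    intro hn
    have hlt : n < S₀.P.length := by omega
    have hPn : (mchain hsys hls S₀ n).P = S₀.P.drop n := ih (by omega)
    have hne : (mchain hsys hls S₀ n).P ≠ [] := by
      rw [hPn]
      simp [List.drop_eq_nil_iff]
      omega
    have hstep := (mchain_spec hsys hls S₀ n).2 hne
    have hd : S₀.P.drop n = S₀.P[n] :: S₀.P.drop (n + 1) := List.drop_eq_getElem_cons hlt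
    rw [hPn, hd] at hstep
    exact (List.cons.injEq _ _ _ _ ▸ hstep).2.symm ▸ rfl

lemma mlabel_prefix (hsys : G.IsLambdaSyncSystem Λ) (hls : Λ.IsLambdaSync)
    {J₀ : ℕ} (S₀ : MState G Λ J₀) :
    ∀ n : ℕ, (hn : n < S₀.P.length) → mlabel hsys hls S₀ n = S₀.P[n] := by
  intro n hn
  have hPn : (mchain hsys hls S₀ n).P = S₀.P.drop n := mchain_pending hsys hls S₀ n (by omega)
  have hne : (mchain hsys hls S₀ n).P ≠ [] := by
    rw [hPn]; simp [List.drop_eq_nil_iff]; omega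
  have hstep := (mchain_spec hsys hls S₀ n).2 hne
  have hd : S₀.P.drop n = S₀.P[n] :: S₀.P.drop (n + 1) := List.drop_eq_getElem_cons hn
  rw [hPn, hd] at hstep
  exact ((List.cons.injEq _ _ _ _).mp hstep.symm).1

/-- The machine produces a stream in `Γ∞⁺(v)` beginning with any prescribed admissible
word of the form `μ ++ η`, where `μ` is a class representative of `v`. -/
lemma stream (hsys : G.IsLambdaSyncSystem Λ) (hls : Λ.IsLambdaSync)
    {l : ℕ} (v : G.V l) (μ η : List A) (hμ : μ ∈ Λ.Sync l)
    (hΓ : G.ΓminusV v = Λ.Γminus l μ) (hμη : μ ++ η ∈ Λ.L) :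
    ∃ x ∈ G.GammaInf v, ∀ (i : ℕ) (h : i < (μ ++ η).length), x i = (μ ++ η)[i] := by
  set W := μ ++ η with hW
  obtain ⟨τ₀, hτ₀, hWτ⟩ := hls W.length W ⟨hμη, rfl⟩ (l + W.length) (Nat.le_add_left _ _)
  have esub : l + W.length - W.length = l := by omega
  rw [esub] at hWτ
  have hΓ₀ : G.ΓminusV v = Λ.Γminus l (W ++ τ₀) := by
    rw [hΓ, hW, List.append_assoc]
    exact (ShiftLang.gamma_append_sync hμ (by rw [← List.append_assoc]; exact hWτ.1)).symm
  set S₀ : MState G Λ l := ⟨v, W, τ₀, hτ₀, hWτ.1, hΓ₀⟩ with hS₀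
  refine ⟨mlabel hsys hls S₀, ⟨fun n => (mchain hsys hls S₀ n).u, rfl,
    fun n => (mchain_spec hsys hls S₀ n).1⟩, ?_⟩
  intro i h
  exact mlabel_prefix hsys hls S₀ i h

end Machine


section Join

variable {A : Type*}

/-- Concatenation of a finite word and an infinite sequence. -/
def joinSeq (ξ : List A) (x : ℕ → A) : ℕ → A := fun i =>
  if h : i < ξ.length then ξ[i] else x (i - ξ.length)

lemma ofFn_joinSeq (ξ : List A) (x : ℕ → A) (n : ℕ) :
    (List.ofFn fun i : Fin n => joinSeq ξ x i) =
      ξ.take n ++ (List.ofFn fun i : Fin (n - ξ.length) => x i) := by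
  apply List.ext_getElem
  · simp; omega
  · intro i h1 h2
    have hin : i < n := by simpa using h1
    simp only [List.getElem_ofFn, joinSeq]
    rw [List.getElem_append]
    rcases lt_or_ge i ξ.length with hi | hi
    · have hlt : i < (ξ.take n).length := by
        rw [List.length_take]; omega
      rw [dif_pos hi, dite_cond_eq_true (by simpa using hlt)]
      simp
    · have htl : (ξ.take n).length = ξ.length := by
        rw [List.length_take]; omega
      have hge : ¬ i < (ξ.take n).length := by omega
      rw [dif_neg (by omega), dite_cond_eq_false (by simpa using hge)]
      simp [htl]

variable {G : LGS A} {Λ : ShiftLang A}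

lemma join_mem_X (hsys : G.IsLambdaSyncSystem Λ) {l : ℕ} {u : G.V l}
    {ξ : List A} {x : ℕ → A} (hξ : ξ ∈ G.ΓminusV u) (hx : x ∈ G.GammaInf u) :
    joinSeq ξ x ∈ Λ.X := by
  intro n
  obtain ⟨vs, hvs0, hE⟩ := hx
  have hpath : ∀ k, G.Path u (List.ofFn fun i : Fin k => x i) (vs k) := by
    intro k
    have := LGS.path_ofFn_chain vs x hE k
    rwa [hvs0] at this
  have hmem : ∀ k, ξ ++ (List.ofFn fun i : Fin k => x i) ∈ Λ.L := fun k =>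
    LGS.leaves_mem_L hsys hξ (hpath k)
  rw [ofFn_joinSeq]
  rcases le_or_gt n ξ.length with hn | hn
  · have h0 : n - ξ.length = 0 := by omega
    rw [h0]
    simp only [List.ofFn_zero, List.append_nil]
    have hξL : ξ ∈ Λ.L := by simpa using hmem 0
    have : ξ.take n ++ ξ.drop n ∈ Λ.L := by rwa [List.take_append_drop]
    exact ShiftLang.factor_left this
  · rw [List.take_of_length_le (by omega)]
    exact hmem _

end Join

section Cyl

variable {A : Type*} [TopologicalSpace A] [DiscreteTopology A]

lemma cyl_mem_nhds (z : ℕ → A) (n : ℕ) : {y : ℕ → A | ∀ i < n, y i = z i} ∈ nhds z := by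
  have : {y : ℕ → A | ∀ i < n, y i = z i} =
      ⋂ i ∈ Finset.range n, {y : ℕ → A | y i = z i} := by
    ext y; simp
  rw [this]
  refine (isOpen_biInter_finset fun i _ => ?_).mem_nhds (by simp)
  have : {y : ℕ → A | y i = z i} = (fun y : ℕ → A => y i) ⁻¹' {z i} := rfl
  rw [this]
  exact (continuous_apply i).isOpen_preimage _ (isOpen_discrete _)

lemma exists_cyl_subset {z : ℕ → A} {U : Set (ℕ → A)} (hU : U ∈ nhds z) :
    ∃ n : ℕ, {y : ℕ → A | ∀ i < n, y i = z i} ⊆ U := by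
  rw [nhds_pi, Filter.mem_pi] at hU
  obtain ⟨I, hIfin, V, hV, hsub⟩ := hU
  obtain ⟨n, hn⟩ : ∃ n : ℕ, ∀ i ∈ I, i < n := by
    rcases hIfin.bddAbove with ⟨m, hm⟩
    exact ⟨m + 1, fun i hi => by have := hm hi; omega⟩
  refine ⟨n, fun y hy => hsub ?_⟩
  intro i hi
  have : y i = z i := hy i (hn i hi)
  rw [this]
  exact mem_of_mem_nhds (hV i)

end Cyl


/-- for a `λ`-synchronizing subshift `Λ`, the one-sided shift space `X_Λ` is
perfect (has no isolated points) if and only if `𝔏^{λ(Λ)}` satisfies condition (I). -/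
theorem perfect_iff_conditionI {A : Type*} [TopologicalSpace A] [DiscreteTopology A]
    (G : LGS A) (Λ : ShiftLang A)
    (hirr : Λ.Irreducible) (hls : Λ.IsLambdaSync) (hsys : G.IsLambdaSyncSystem Λ) :
    Preperfect Λ.X ↔ G.ConditionI := by
  constructor
  · -- Perfectness implies condition (I)
    intro hperf l v
    obtain ⟨μ, hμ, hΓv⟩ := hsys.1 l v
    by_contra hno
    push_neg at hno
    obtain ⟨x₀, hx₀, hx₀pre⟩ := stream hsys hls v μ [] hμ hΓv (by simpa using hμ.1)
    have hx₀μ : ∀ (i : ℕ) (h : i < μ.length), x₀ i = μ[i]'h := by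
      intro i h
      have := hx₀pre i (by simpa using h)
      simpa using this
    obtain ⟨ξ, hξlen, hξμ⟩ := ShiftLang.ext_left_iter hμ.1 l
    have hξΓ : ξ ∈ G.ΓminusV v := by
      rw [hΓv]
      exact ⟨⟨ShiftLang.factor_left hξμ, hξlen⟩, hξμ⟩
    set z := joinSeq ξ x₀ with hzdef
    have hz : z ∈ Λ.X := join_mem_X hsys hξΓ hx₀
    set m := μ.length with hm
    have hzξ : ∀ (j : ℕ) (hj : j < l), z j = ξ[j]'(by rw [hξlen]; exact hj) := by
      intro j hj
      rw [hzdef]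
      simp [joinSeq, hξlen, hj]
    have hzx : ∀ j, l ≤ j → z j = x₀ (j - l) := by
      intro j hj
      rw [hzdef]
      simp [joinSeq, hξlen, Nat.not_lt.mpr hj]
    have hacc := hperf z hz
    rw [accPt_iff_nhds] at hacc
    obtain ⟨y, ⟨hyC, hyX⟩, hyne⟩ := hacc _ (cyl_mem_nhds z (l + m))
    have hyC' : ∀ i, i < l + m → y i = z i := hyC
    set ω : ℕ → A := fun i => y (l + m + i) with hω
    have hkey : ∀ i : ℕ, ω i = x₀ (m + i) := by
      intro i
      set s := i + 1 with hs
      set Wfn := List.ofFn (fun j : Fin s => ω j) with hWfn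
      have hWfnlen : Wfn.length = s := by rw [hWfn, List.length_ofFn]
      have hYeq : (List.ofFn fun j : Fin (l + m + s) => y j) = ξ ++ (μ ++ Wfn) := by
        apply List.ext_getElem
        · simp [hξlen, hWfnlen]; omega
        · intro j hj1 hj2
          have hjlt : j < l + m + s := by simp at hj1; omega
          rw [List.getElem_ofFn]
          rcases lt_or_ge j l with hjl | hjl
          · rw [List.getElem_append_left (by omega : j < ξ.length)]
            rw [hyC' j (by omega), hzξ j hjl]
          · rw [List.getElem_append_right (by omega : ξ.length ≤ j)]
            rcases lt_or_ge j (l + m) with hjm | hjm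
            · rw [List.getElem_append_left (by simp [hξlen]; omega : j - ξ.length < μ.length)]
              rw [hyC' j hjm, hzx j hjl]
              have := hx₀μ (j - l) (by omega)
              rw [this]
              congr 1
              omega
            · rw [List.getElem_append_right (by simp [hξlen]; omega : μ.length ≤ j - ξ.length)]
              rw [List.getElem_ofFn]
              have : y j = ω (j - ξ.length - μ.length) := by
                rw [hω]
                congr 1
                simp [hξlen]
                omega
              rw [this]
      have hWL : μ ++ Wfn ∈ Λ.L := by
        have hT := hyX (l + m + s)
        rw [hYeq] at hT
        exact ShiftLang.factor_right hT
      obtain ⟨q, hq, hqpre⟩ := stream hsys hls v μ Wfn hμ hΓv hWL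
      have hqx : q = x₀ := hno q hq x₀ hx₀
      have h1 := hqpre (m + i) (by simp [hWfnlen] <;> omega)
      rw [hqx] at h1
      rw [List.getElem_append_right (by omega : μ.length ≤ m + i)] at h1
      rw [List.getElem_ofFn] at h1
      rw [h1]
      congr 1
      simp
      omega
    apply hyne
    funext i
    rcases lt_or_ge i (l + m) with hi | hi
    · exact hyC' i hi
    · have h1 : y i = ω (i - (l + m)) := by
        rw [hω]
        congr 1
        omega
      have h2 : z i = x₀ (i - l) := hzx i (by omega)
      rw [h1, hkey, h2]
      congr 1
      omega
  · -- Condition (I) implies perfectness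
    intro hI z hz
    rw [accPt_iff_nhds]
    intro U hU
    obtain ⟨n, hn⟩ := exists_cyl_subset hU
    set w := List.ofFn (fun i : Fin n => z i) with hw
    have hwL : w ∈ Λ.L := hz n
    have hwlen : w.length = n := by simp [hw]
    obtain ⟨τ, hτ, hwτ⟩ := hls n w ⟨hwL, hwlen⟩ n le_rfl
    have hwτL : w ++ τ ∈ Λ.L := hwτ.1
    obtain ⟨u, hu⟩ := hsys.2.1 n τ hτ
    obtain ⟨α, hα, β, hβ, hab⟩ := hI n u
    have hwmem : w ∈ G.ΓminusV u := by
      rw [hu]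
      exact ⟨⟨hwL, hwlen⟩, hwτL⟩
    have hy1 : joinSeq w α ∈ Λ.X := join_mem_X hsys hwmem hα
    have hy2 : joinSeq w β ∈ Λ.X := join_mem_X hsys hwmem hβ
    have hprefix : ∀ γ : ℕ → A, ∀ i < n, joinSeq w γ i = z i := by
      intro γ i hi
      have hi' : i < w.length := by omega
      simp only [joinSeq, dif_pos hi']
      simp [hw]
    have htail : ∀ (γ : ℕ → A) (j : ℕ), joinSeq w γ (n + j) = γ j := by
      intro γ j
      have hb : ¬ (n + j < w.length) := by omega
      simp only [joinSeq, dif_neg hb]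
      congr 1
      omega
    have hne12 : joinSeq w α ≠ joinSeq w β := by
      intro hcontra
      apply hab
      funext j
      have := congrFun hcontra (n + j)
      rwa [htail, htail] at this
    rcases eq_or_ne (joinSeq w α) z with he | he
    · exact ⟨joinSeq w β, ⟨hn (fun i hi => hprefix β i hi), hy2⟩, by rw [← he]; exact hne12.symm⟩
    · exact ⟨joinSeq w α, ⟨hn (fun i hi => hprefix α i hi), hy1⟩, he⟩
end
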